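/- Let 0 < m ≤ M. For every price sequence σ of length n ≥ 1 with all prices in [m, M], the reservation-price strategy with reservation price √(mM) satisfies max_k σ k ≤ √(M/m) · profit(RPP(√(mM)), σ); that is, the deterministic algorithm RPP(√(mM)) is √(M/m)-competitive for online search. -/

import Mathlib

/-- The maximum price of a price sequence of positive length. -/
noncomputable def maxPrice {n : ℕ} (hn : 0 < n) (σ : Fin n → ℝ) : ℝ :=
  Finset.univ.sup' ⟨⟨0, hn⟩, Finset.mem_univ _⟩ σ

/-- The profit of the reservation-price strategy `RPP p` on the price sequence
`σ`: it accepts at the least index `k` with `σ k ≥ p`, obtaining `σ k`; if no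
such index exists it must accept the last price `σ (n-1)`. -/
noncomputable def rppProfit {n : ℕ} (hn : 0 < n) (p : ℝ) (σ : Fin n → ℝ) : ℝ :=
  if h : ∃ k : Fin n, p ≤ σ k then
    σ ((Finset.univ.filter (fun k : Fin n => p ≤ σ k)).min'
      (h.imp fun k hk => Finset.mem_filter.mpr ⟨Finset.mem_univ _, hk⟩))
  else σ ⟨n - 1, Nat.sub_lt hn one_pos⟩

/-- The reservation-price strategy with reservation price
`√(mM)` is `√(M/m)`-competitive for online search. -/
theorem rpp_sqrt_is_sqrt_competitive
    (m M : ℝ) (hm : 0 < m) (hmM : m ≤ M)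
    (n : ℕ) (hn : 0 < n) (σ : Fin n → ℝ) (hσ : ∀ i, m ≤ σ i ∧ σ i ≤ M) :
    maxPrice hn σ ≤ Real.sqrt (M / m) * rppProfit hn (Real.sqrt (m * M)) σ := by
  have hM : 0 < M := lt_of_lt_of_le hm hmM
  have key1 : Real.sqrt (M / m) * Real.sqrt (m * M) = M := by
    rw [← Real.sqrt_mul (by positivity)]
    rw [div_mul_eq_mul_div, mul_comm m M, mul_div_assoc, mul_div_assoc,
      div_self hm.ne', mul_one, Real.sqrt_mul_self hM.le]
  have key2 : Real.sqrt (M / m) * m = Real.sqrt (m * M) := by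
    rw [← Real.sqrt_sq hm.le, ← Real.sqrt_mul (by positivity)]
    congr 1
    field_simp
    ring
    rw [Real.sq_sqrt (by positivity)]
  unfold rppProfit
  split_ifs with h
  · set k := (Finset.univ.filter (fun k : Fin n => Real.sqrt (m * M) ≤ σ k)).min'
      (h.imp fun k hk => Finset.mem_filter.mpr ⟨Finset.mem_univ _, hk⟩) with hk
    have hσk : Real.sqrt (m * M) ≤ σ k := by
      have := Finset.min'_mem (Finset.univ.filter (fun k : Fin n => Real.sqrt (m * M) ≤ σ k))
        (h.imp fun k hk => Finset.mem_filter.mpr ⟨Finset.mem_univ _, hk⟩)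
      exact (Finset.mem_filter.mp this).2
    have h1 : maxPrice hn σ ≤ M := Finset.sup'_le _ _ fun i _ => (hσ i).2
    calc maxPrice hn σ ≤ M := h1
      _ = Real.sqrt (M / m) * Real.sqrt (m * M) := key1.symm
      _ ≤ Real.sqrt (M / m) * σ k := by
          apply mul_le_mul_of_nonneg_left hσk (by positivity)
  · push_neg at h
    have h1 : maxPrice hn σ ≤ Real.sqrt (m * M) := by
      apply Finset.sup'_le
      intro i _
      exact (h i).le
    calc maxPrice hn σ ≤ Real.sqrt (m * M) := h1
      _ = Real.sqrt (M / m) * m := key2.symm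
      _ ≤ _ := mul_le_mul_of_nonneg_left (hσ _).1 (by positivity)
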